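/- Suppose the partition $\mathcal{P}=(P_1,\ldots,P_{t-1})$ is $\epsilon$-stable to $\mathcal{V}=(V_1,\ldots,V_r)$ and every nonempty intersection $P_j \cap V_i$ has size at least $10tr\epsilon$. Then one can remove a set $X$ of at most $4tr\epsilon$ vertices so that the restricted partition $\mathcal{P}_X = (P_1\setminus X,\ldots,P_{t-1}\setminus X)$ is (exactly) stable to $\mathcal{V}_X = (V_1\setminus X,\ldots,V_r\setminus X)$. -/
import Mathlib

private lemma ncard_biUnion_le'' {V ι : Type*} [Fintype V] (s : Finset ι) (f : ι → Set V) :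
    (⋃ i ∈ s, f i).ncard ≤ ∑ i ∈ s, (f i).ncard := by
  classical
  induction s using Finset.induction with
  | empty => simp
  | @insert a s ha ih =>
      rw [Finset.set_biUnion_insert, Finset.sum_insert ha]
      exact (Set.ncard_union_le _ _).trans (Nat.add_le_add_left ih _)

private lemma ncard_iUnion_le' {V : Type*} [Fintype V] {n : ℕ} (f : Fin n → Set V) :
    (⋃ j, f j).ncard ≤ ∑ j, (f j).ncard := by
  have h : (⋃ j, f j) = ⋃ j ∈ Finset.univ, f j := by simp
  rw [h]
  exact ncard_biUnion_le'' _ _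

private lemma ncard_carve {V : Type*} [Fintype V] (S Y B : Set V) (hBS : B ⊆ S) (hBY : B ⊆ Y) :
    (S \ Y).ncard + B.ncard ≤ S.ncard := by
  have hd : Disjoint (S \ Y) B := Set.disjoint_left.mpr (fun x hx hxB => hx.2 (hBY hxB))
  calc (S \ Y).ncard + B.ncard = ((S \ Y) ∪ B).ncard :=
        (Set.ncard_union_eq hd (Set.toFinite _) (Set.toFinite _)).symm
    _ ≤ S.ncard := Set.ncard_le_ncard (Set.union_subset Set.diff_subset hBS) (Set.toFinite _)

private lemma ncard_split {V : Type*} [Fintype V] (S Y : Set V) :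
    S.ncard ≤ (S \ Y).ncard + Y.ncard := by
  refine le_trans (Set.ncard_le_ncard ?_ (Set.toFinite _)) (Set.ncard_union_le _ _)
  intro x hx
  by_cases h : x ∈ Y
  · exact Or.inr h
  · exact Or.inl ⟨hx, h⟩

private lemma ncard_glue {V : Type*} [Fintype V] (P Sa Sb : Set V) (ha : Sa ⊆ P) (hb : Sb ⊆ P)
    (hd : Disjoint Sa Sb) : Sa.ncard + Sb.ncard ≤ P.ncard := by
  rw [← Set.ncard_union_eq hd (Set.toFinite _) (Set.toFinite _)]
  exact Set.ncard_le_ncard (Set.union_subset ha hb) (Set.toFinite _)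

/-- The class `A` is partial in the part `Pj`: it meets `Pj` but is not contained in it. -/
def PartIn {V : Type*} (A Pj : Set V) : Prop :=
  (A ∩ Pj).Nonempty ∧ ¬ A ⊆ Pj

/-- The integral part of `Pj`: the union of those classes `Vf i` contained in `Pj`. -/
def intPart {V : Type*} {r : ℕ} (Vf : Fin r → Set V) (Pj : Set V) : Set V :=
  {v | ∃ i, v ∈ Vf i ∧ Vf i ⊆ Pj}

/-- The partition `Pf` is (exactly) stable to `Vf`. -/
def StableTo {V : Type*} {r s : ℕ} (Vf : Fin r → Set V) (Pf : Fin s → Set V) : Prop :=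
  (∀ j, ∀ i i', PartIn (Vf i) (Pf j) → PartIn (Vf i') (Pf j) → i = i') ∧
  (∀ j j', (∃ i, PartIn (Vf i) (Pf j)) → (∃ i, PartIn (Vf i) (Pf j')) →
    (intPart Vf (Pf j)).ncard = (intPart Vf (Pf j')).ncard) ∧
  (∀ j j', (∃ i, PartIn (Vf i) (Pf j)) → (¬ ∃ i, PartIn (Vf i) (Pf j')) →
    (intPart Vf (Pf j)).ncard ≤ (Pf j').ncard) ∧
  (∀ j i, (∃ j', PartIn (Vf i) (Pf j')) → (Vf i).ncard ≤ (intPart Vf (Pf j)).ncard) ∧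
  (∀ j j' i, j ≠ j' → Vf i ⊆ Pf j →
    (Pf j \ Vf i).ncard ≤ (intPart Vf (Pf j')).ncard)

/-- The partition `Pf` is `ε`-stable to `Vf`: each defining condition of stability holds
up to an additive error of `ε`. -/
def EpsStableTo {V : Type*} {r s : ℕ} (Vf : Fin r → Set V) (Pf : Fin s → Set V)
    (ε : ℝ) : Prop :=
  (∀ j, ∀ i i', PartIn (Vf i) (Pf j) → PartIn (Vf i') (Pf j) → i = i') ∧
  (∀ j j', (∃ i, PartIn (Vf i) (Pf j)) → (∃ i, PartIn (Vf i) (Pf j')) →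
    ((intPart Vf (Pf j)).ncard : ℝ) ≤ ((intPart Vf (Pf j')).ncard : ℝ) + ε) ∧
  (∀ j j', (∃ i, PartIn (Vf i) (Pf j)) → (¬ ∃ i, PartIn (Vf i) (Pf j')) →
    ((intPart Vf (Pf j)).ncard : ℝ) ≤ ((Pf j').ncard : ℝ) + ε) ∧
  (∀ j i, (∃ j', PartIn (Vf i) (Pf j')) →
    ((Vf i).ncard : ℝ) ≤ ((intPart Vf (Pf j)).ncard : ℝ) + ε) ∧
  (∀ j j' i, j ≠ j' → Vf i ⊆ Pf j →
    ((Pf j \ Vf i).ncard : ℝ) ≤ ((intPart Vf (Pf j')).ncard : ℝ) + ε)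

/-- Lemma: if `𝒫` is `ε`-stable to `𝒱` and every nonempty intersection `P_j ∩ V_i` has
size at least `10 t r ε`, then one can remove a set `X` of at most `4 t r ε` vertices so
that `𝒫_X` is stable to `𝒱_X`. -/
theorem stmt19 {V : Type*} [Fintype V] (r t : ℕ) (ht : 3 ≤ t) (hr : t ≤ r)
    (Vf : Fin r → Set V) (Pf : Fin (t - 1) → Set V)
    (hVpart : ∀ x : V, ∃! i, x ∈ Vf i) (hPpart : ∀ x : V, ∃! j, x ∈ Pf j)
    (ε : ℝ) (hε : 0 < ε)
    (hstab : EpsStableTo Vf Pf ε)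
    (hbig : ∀ i j, (Vf i ∩ Pf j).Nonempty → 10 * t * r * ε ≤ ((Vf i ∩ Pf j).ncard : ℝ)) :
    ∃ X : Set V, (X.ncard : ℝ) ≤ 4 * t * r * ε ∧
      StableTo (fun i => Vf i \ X) (fun j => Pf j \ X) := by
  classical
  obtain ⟨hs1, hs2, hs3, hs4, hs5⟩ := hstab
  set k := ⌊ε⌋₊ with hkdef
  have hε0 : (0:ℝ) ≤ ε := hε.le
  have hkε : (k:ℝ) ≤ ε := Nat.floor_le hε0
  have htR : (3:ℝ) ≤ (t:ℝ) := by exact_mod_cast ht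
  have hrR : (t:ℝ) ≤ (r:ℝ) := by exact_mod_cast hr
  have hrR3 : (3:ℝ) ≤ (r:ℝ) := le_trans htR hrR
  have htr9 : (9:ℝ) ≤ (t:ℝ) * (r:ℝ) := by nlinarith
  -- ε-inequalities in ℕ form
  have hnat : ∀ a b : ℕ, (a:ℝ) ≤ (b:ℝ) + ε → a ≤ b + k := by
    intro a b h
    have hfl := Nat.lt_floor_add_one ε
    have h2 : (a:ℝ) < ((b + k : ℕ) : ℝ) + 1 := by push_cast; linarith
    have h3 : a < (b + k) + 1 := by exact_mod_cast h2
    omega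
  -- partition facts
  have hPdisj : ∀ j j' : Fin (t-1), j ≠ j' → ∀ x, x ∈ Pf j → x ∈ Pf j' → False := by
    intro j j' hne x hx hx'
    exact hne ((hPpart x).unique hx hx')
  have hVdisj : ∀ i i' : Fin r, i ≠ i' → ∀ x, x ∈ Vf i → x ∈ Vf i' → False := by
    intro i i' hne x hx hx'
    exact hne ((hVpart x).unique hx hx')
  have hIsub : ∀ j, intPart Vf (Pf j) ⊆ Pf j := by
    rintro j v ⟨i, hv, hsub⟩
    exact hsub hv
  have hpieceI : ∀ i j, PartIn (Vf i) (Pf j) → ∀ x, x ∈ Vf i → x ∈ intPart Vf (Pf j) → False := by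
    rintro i j hij x hxV ⟨i', hxV', hsub⟩
    by_cases h : i' = i
    · subst h
      exact hij.2 hsub
    · exact hVdisj i' i h x hxV' hxV
  have hPsubI : ∀ j, (¬ ∃ i, PartIn (Vf i) (Pf j)) → Pf j ⊆ intPart Vf (Pf j) := by
    intro j hJ x hx
    obtain ⟨i, hxi, -⟩ := hVpart x
    by_cases h : Vf i ⊆ Pf j
    · exact ⟨i, hxi, h⟩
    · exact absurd ⟨i, ⟨x, hxi, hx⟩, h⟩ hJ
  have hPeqI : ∀ j, (¬ ∃ i, PartIn (Vf i) (Pf j)) → Pf j = intPart Vf (Pf j) :=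
    fun j h => Set.Subset.antisymm (hPsubI j h) (hIsub j)
  have nat2 : ∀ j j', (∃ i, PartIn (Vf i) (Pf j)) → (∃ i, PartIn (Vf i) (Pf j')) →
      (intPart Vf (Pf j)).ncard ≤ (intPart Vf (Pf j')).ncard + k :=
    fun j j' h h' => hnat _ _ (hs2 j j' h h')
  have nat3 : ∀ j j', (∃ i, PartIn (Vf i) (Pf j)) → (¬ ∃ i, PartIn (Vf i) (Pf j')) →
      (intPart Vf (Pf j)).ncard ≤ (Pf j').ncard + k :=
    fun j j' h h' => hnat _ _ (hs3 j j' h h')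
  have nat4 : ∀ j i, (∃ j', PartIn (Vf i) (Pf j')) →
      (Vf i).ncard ≤ (intPart Vf (Pf j)).ncard + k :=
    fun j i h => hnat _ _ (hs4 j i h)
  have nat5 : ∀ j j' i, j ≠ j' → Vf i ⊆ Pf j →
      (Pf j \ Vf i).ncard ≤ (intPart Vf (Pf j')).ncard + k :=
    fun j j' i h h' => hnat _ _ (hs5 j j' i h h')
  -- pieces are big
  have hbig3 : ∀ i j, (Vf i ∩ Pf j).Nonempty → 3*k ≤ (Vf i ∩ Pf j).ncard := by
    intro i j h
    have h1 := hbig i j h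
    have h2 : (3:ℝ)*(k:ℝ) ≤ 10*(t:ℝ)*(r:ℝ)*ε := by nlinarith
    have h3 : ((3*k : ℕ):ℝ) ≤ ((Vf i ∩ Pf j).ncard : ℝ) := by push_cast; linarith
    exact_mod_cast h3
  have hbig2' : ∀ i j, (Vf i ∩ Pf j).Nonempty → 2*k < (Vf i ∩ Pf j).ncard := by
    intro i j h
    have h1 := hbig i j h
    have h2 : (2:ℝ)*(k:ℝ) < 10*(t:ℝ)*(r:ℝ)*ε := by nlinarith
    have h3 : ((2*k : ℕ):ℝ) < ((Vf i ∩ Pf j).ncard : ℝ) := by push_cast; linarith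
    exact_mod_cast h3
  -- the minimum
  have htpos : 0 < t - 1 := by omega
  obtain ⟨j₀, hj₀⟩ : ∃ j₀ : Fin (t-1), ∀ j,
      (intPart Vf (Pf j₀)).ncard ≤ (intPart Vf (Pf j)).ncard := by
    obtain ⟨j₀, -, h⟩ := Finset.exists_min_image Finset.univ
      (fun j => (intPart Vf (Pf j)).ncard) ⟨⟨0, htpos⟩, Finset.mem_univ _⟩
    exact ⟨j₀, fun j => h j (Finset.mem_univ _)⟩
  set G := (intPart Vf (Pf j₀)).ncard with hGdef
  have hJlow : ∀ j, (∃ i, PartIn (Vf i) (Pf j)) → (intPart Vf (Pf j)).ncard ≤ G + k := by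
    intro j hj
    by_cases hjj : j = j₀
    · subst hjj
      omega
    by_cases h0 : ∃ i, PartIn (Vf i) (Pf j₀)
    · exact nat2 j j₀ hj h0
    · have h := nat3 j j₀ hj h0
      rwa [hPeqI j₀ h0] at h
  -- the per-part deletion sets
  have hex : ∀ j, ∃ Y : Set V, Y ⊆ Pf j ∧ Y.ncard ≤ 4*k ∧
      (intPart Vf (Pf j)).ncard ≤ (intPart Vf (Pf j) \ Y).ncard + 2*k ∧
      ((intPart Vf (Pf j)).ncard ≤ G + 2*k → (intPart Vf (Pf j) \ Y).ncard = G) ∧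
      (∀ i, PartIn (Vf i) (Pf j) → ∃ B, B ⊆ Vf i ∩ Pf j ∧ B ⊆ Y ∧ B.ncard = 3*k) ∧
      (G + 2*k < (intPart Vf (Pf j)).ncard → ∀ i, (Vf i).Nonempty → Vf i ⊆ Pf j →
        ((Pf j \ Vf i) \ Y).ncard ≤ G) := by
    intro j
    by_cases hJPj : ∃ i, PartIn (Vf i) (Pf j)
    · -- a part with a partial class
      have hAj : (intPart Vf (Pf j)).ncard ≤ G + k := hJlow j hJPj
      obtain ⟨ip, hip⟩ := hJPj
      have h3k : 3*k ≤ (Vf ip ∩ Pf j).ncard := hbig3 ip j hip.1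
      obtain ⟨B, hBsub, hBcard⟩ := Set.exists_subset_card_eq h3k
      obtain ⟨Aset, hAsub, hAcard⟩ := Set.exists_subset_card_eq
        (Nat.sub_le (intPart Vf (Pf j)).ncard G)
      have hIY : intPart Vf (Pf j) \ (Aset ∪ B) = intPart Vf (Pf j) \ Aset := by
        ext x
        simp only [Set.mem_diff, Set.mem_union]
        constructor
        · rintro ⟨h1, h2⟩
          exact ⟨h1, fun hA => h2 (Or.inl hA)⟩
        · rintro ⟨h1, h2⟩
          refine ⟨h1, fun h => ?_⟩
          rcases h with hA | hB
          · exact h2 hA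
          · exact hpieceI ip j hip x (hBsub hB).1 h1
      have hcalc : (intPart Vf (Pf j) \ Aset).ncard = G := by
        rw [Set.ncard_diff hAsub, hAcard]
        have := hj₀ j
        omega
      refine ⟨Aset ∪ B, ?_, ?_, ?_, ?_, ?_, ?_⟩
      · exact Set.union_subset (hAsub.trans (hIsub j)) (hBsub.trans Set.inter_subset_right)
      · have h1 := Set.ncard_union_le Aset B
        omega
      · rw [hIY, hcalc]
        omega
      · intro _
        rw [hIY, hcalc]
      · intro i' hi'
        have hii : i' = ip := hs1 j i' ip hi' hip
        subst hii
        exact ⟨B, hBsub, Set.subset_union_right, hBcard⟩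
      · intro hcon
        omega
    · by_cases hlow : (intPart Vf (Pf j)).ncard ≤ G + 2*k
      · -- a low part with no partial class
        obtain ⟨Aset, hAsub, hAcard⟩ := Set.exists_subset_card_eq
          (Nat.sub_le (intPart Vf (Pf j)).ncard G)
        have hcalc : (intPart Vf (Pf j) \ Aset).ncard = G := by
          rw [Set.ncard_diff hAsub, hAcard]
          have := hj₀ j
          omega
        refine ⟨Aset, hAsub.trans (hIsub j), ?_, ?_, ?_, ?_, ?_⟩
        · omega
        · rw [hcalc]
          omega
        · intro _
          exact hcalc
        · intro i hi
          exact absurd ⟨i, hi⟩ hJPj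
        · intro hcon
          omega
      · -- a high part with no partial class
        by_cases htwo : ∃ i1 i2, i1 ≠ i2 ∧ (Vf i1 ∩ Pf j).Nonempty ∧ Vf i1 ⊆ Pf j ∧
            (Vf i2 ∩ Pf j).Nonempty ∧ Vf i2 ⊆ Pf j
        · obtain ⟨i1, i2, h12, hn1, hsub1, hn2, hsub2⟩ := htwo
          obtain ⟨B1, hB1sub, hB1card⟩ := Set.exists_subset_card_eq
            (show k ≤ (Vf i1 ∩ Pf j).ncard by have := hbig3 i1 j hn1; omega)
          obtain ⟨B2, hB2sub, hB2card⟩ := Set.exists_subset_card_eq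
            (show k ≤ (Vf i2 ∩ Pf j).ncard by have := hbig3 i2 j hn2; omega)
          refine ⟨B1 ∪ B2, ?_, ?_, ?_, ?_, ?_, ?_⟩
          · exact Set.union_subset (hB1sub.trans Set.inter_subset_right)
              (hB2sub.trans Set.inter_subset_right)
          · have h1 := Set.ncard_union_le B1 B2
            omega
          · have h1 := ncard_split (intPart Vf (Pf j)) (B1 ∪ B2)
            have h2 := Set.ncard_union_le B1 B2
            omega
          · intro hcon
            omega
          · intro i hi
            exact absurd ⟨i, hi⟩ hJPj
          · intro hhigh i hiV hiP
            obtain ⟨ic, Bc, hBcV, hBcY, hBccard, hicne⟩ :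
                ∃ ic Bc, Bc ⊆ Vf ic ∩ Pf j ∧ Bc ⊆ B1 ∪ B2 ∧ Bc.ncard = k ∧ ic ≠ i := by
              by_cases h : i = i1
              · refine ⟨i2, B2, hB2sub, Set.subset_union_right, hB2card, ?_⟩
                rw [h]
                exact Ne.symm h12
              · exact ⟨i1, B1, hB1sub, Set.subset_union_left, hB1card, Ne.symm h⟩
            have hBcPV : Bc ⊆ Pf j \ Vf i := fun z hz =>
              ⟨(hBcV hz).2, fun hzi => hVdisj ic i hicne z (hBcV hz).1 hzi⟩
            have hc := ncard_carve (Pf j \ Vf i) (B1 ∪ B2) Bc hBcPV hBcY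
            have hne0 : j ≠ j₀ := by
              rintro rfl
              omega
            have h5 := nat5 j j₀ i hne0 hiP
            omega
        · refine ⟨∅, Set.empty_subset _, by simp, by simp, ?_, ?_, ?_⟩
          · intro hcon
            omega
          · intro i hi
            exact absurd ⟨i, hi⟩ hJPj
          · intro hhigh i hiV hiP
            have hPVempty : Pf j \ Vf i = ∅ := by
              by_contra hcon
              obtain ⟨x, hxP, hxV⟩ := Set.nonempty_iff_ne_empty.mpr hcon
              obtain ⟨i', hxi', hi'sub⟩ := hPsubI j hJPj hxP
              have hne : i' ≠ i := fun h => hxV (h ▸ hxi')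
              obtain ⟨v, hv⟩ := hiV
              exact htwo ⟨i', i, hne, ⟨x, hxi', hxP⟩, hi'sub, ⟨v, hv, hiP hv⟩, hiP⟩
            rw [hPVempty]
            simp
  choose XF hY1 hY2 hY3 hY4 hY5 hY6 using hex
  set X := ⋃ j, XF j with hXdef
  have hXFX : ∀ j, XF j ⊆ X := fun j => Set.subset_iUnion XF j
  -- size of X
  have hXcard : X.ncard ≤ (t-1) * (4*k) := by
    calc X.ncard ≤ ∑ j, (XF j).ncard := ncard_iUnion_le' XF
      _ ≤ ∑ _j : Fin (t-1), 4*k := Finset.sum_le_sum (fun j _ => hY2 j)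
      _ = (t-1) * (4*k) := by
          rw [Finset.sum_const, Finset.card_univ, Fintype.card_fin, smul_eq_mul]
  have hXreal : (X.ncard : ℝ) ≤ 4*(t:ℝ)*ε := by
    have h1 : (X.ncard : ℝ) ≤ (((t-1) * (4*k) : ℕ) : ℝ) := by exact_mod_cast hXcard
    have h2 : (((t-1) * (4*k) : ℕ) : ℝ) ≤ (t:ℝ) * (4*(k:ℝ)) := by
      push_cast
      have h3 : ((t-1 : ℕ):ℝ) ≤ (t:ℝ) := by exact_mod_cast Nat.sub_le t 1
      have h4 : (0:ℝ) ≤ (k:ℝ) := Nat.cast_nonneg k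
      nlinarith
    have h5 : (t:ℝ) * (4*(k:ℝ)) ≤ (t:ℝ) * (4*ε) := by nlinarith
    linarith
  have hXbudget : (X.ncard : ℝ) ≤ 4*t*r*ε := by nlinarith
  have hX10 : (X.ncard : ℝ) < 10*t*r*ε := by nlinarith
  -- nonempty pieces survive
  have hsurv : ∀ i j, (Vf i ∩ Pf j).Nonempty → ((Vf i ∩ Pf j) \ X).Nonempty := by
    intro i j h
    rw [Set.nonempty_iff_ne_empty]
    intro hcon
    have hsub : Vf i ∩ Pf j ⊆ X := Set.diff_eq_empty.mp hcon
    have h1 : (Vf i ∩ Pf j).ncard ≤ X.ncard := Set.ncard_le_ncard hsub (Set.toFinite _)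
    have h2 := hbig i j h
    have h3 : ((Vf i ∩ Pf j).ncard : ℝ) ≤ (X.ncard : ℝ) := by exact_mod_cast h1
    linarith
  -- localization
  have hloc : ∀ j (S : Set V), S ⊆ Pf j → S \ X = S \ XF j := by
    intro j S hS
    ext x
    simp only [Set.mem_diff]
    constructor
    · rintro ⟨hxS, hxX⟩
      exact ⟨hxS, fun h => hxX (hXFX j h)⟩
    · rintro ⟨hxS, hxY⟩
      refine ⟨hxS, fun hxX => ?_⟩
      rw [hXdef] at hxX
      obtain ⟨j', hxj'⟩ := Set.mem_iUnion.mp hxX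
      by_cases h : j' = j
      · subst h
        exact hxY hxj'
      · exact hPdisj j' j h x (hY1 j' hxj') (hS hxS)
  -- structure preservation
  have SP3 : ∀ i j, (Vf i).Nonempty → (Vf i \ X ⊆ Pf j \ X) → Vf i ⊆ Pf j := by
    intro i j hne hss x hx
    by_contra hxP
    obtain ⟨j', hxj', -⟩ := hPpart x
    have hjj : j' ≠ j := fun h => hxP (h ▸ hxj')
    obtain ⟨y, hy⟩ := hsurv i j' ⟨x, hx, hxj'⟩
    have hyP : y ∈ Pf j \ X := hss ⟨hy.1.1, hy.2⟩
    exact hPdisj j' j hjj y hy.1.2 hyP.1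
  have SP1 : ∀ i j, PartIn (Vf i \ X) (Pf j \ X) ↔ PartIn (Vf i) (Pf j) := by
    intro i j
    constructor
    · rintro ⟨⟨y, hy⟩, hns⟩
      refine ⟨⟨y, hy.1.1, hy.2.1⟩, fun hsub => hns ?_⟩
      intro z hz
      exact ⟨hsub hz.1, hz.2⟩
    · rintro ⟨hne, hns⟩
      obtain ⟨y, hy⟩ := hsurv i j hne
      refine ⟨⟨y, ⟨hy.1.1, hy.2⟩, ⟨hy.1.2, hy.2⟩⟩, fun hsub => ?_⟩
      obtain ⟨z, hz⟩ := hne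
      exact hns (SP3 i j ⟨z, hz.1⟩ hsub)
  have SP2 : ∀ j, intPart (fun i => Vf i \ X) (Pf j \ X) = intPart Vf (Pf j) \ X := by
    intro j
    ext v
    constructor
    · rintro ⟨i, hv, hsub⟩
      exact ⟨⟨i, hv.1, SP3 i j ⟨v, hv.1⟩ hsub⟩, hv.2⟩
    · rintro ⟨⟨i, hvi, hsub⟩, hvX⟩
      exact ⟨i, ⟨hvi, hvX⟩, fun y hy => ⟨hsub hy.1, hy.2⟩⟩
  have hIXeq : ∀ j, intPart Vf (Pf j) \ X = intPart Vf (Pf j) \ XF j :=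
    fun j => hloc j _ (hIsub j)
  have hIXG : ∀ j, (intPart Vf (Pf j)).ncard ≤ G + 2*k →
      (intPart Vf (Pf j) \ X).ncard = G := by
    intro j hj
    rw [hIXeq j]
    exact hY4 j hj
  have hIXge : ∀ j, G ≤ (intPart Vf (Pf j) \ X).ncard := by
    intro j
    by_cases hj : (intPart Vf (Pf j)).ncard ≤ G + 2*k
    · rw [hIXG j hj]
    · rw [hIXeq j]
      have := hY3 j
      omega
  have hdd : ∀ (P W : Set V), (P \ X) \ (W \ X) = (P \ W) \ X := by
    intro P W
    ext x
    simp only [Set.mem_diff]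
    tauto
  refine ⟨X, hXbudget, ?_, ?_, ?_, ?_, ?_⟩
  · -- uniqueness of partial classes
    intro j i i' h1 h2
    exact hs1 j i i' ((SP1 i j).mp h1) ((SP1 i' j).mp h2)
  · -- equality of integral parts of partial parts
    intro j j' h h'
    obtain ⟨i1, hi1⟩ := h
    obtain ⟨i2, hi2⟩ := h'
    have hJ1 : ∃ i, PartIn (Vf i) (Pf j) := ⟨i1, (SP1 i1 j).mp hi1⟩
    have hJ2 : ∃ i, PartIn (Vf i) (Pf j') := ⟨i2, (SP1 i2 j').mp hi2⟩
    show (intPart (fun i => Vf i \ X) (Pf j \ X)).ncard =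
      (intPart (fun i => Vf i \ X) (Pf j' \ X)).ncard
    rw [SP2 j, SP2 j', hIXG j (by have := hJlow j hJ1; omega),
      hIXG j' (by have := hJlow j' hJ2; omega)]
  · -- integral parts of partial parts vs sizes of non-partial parts
    intro j j' h h'
    obtain ⟨i1, hi1⟩ := h
    have hJ1 : ∃ i, PartIn (Vf i) (Pf j) := ⟨i1, (SP1 i1 j).mp hi1⟩
    show (intPart (fun i => Vf i \ X) (Pf j \ X)).ncard ≤ (Pf j' \ X).ncard
    rw [SP2 j, hIXG j (by have := hJlow j hJ1; omega)]
    exact le_trans (hIXge j')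
      (Set.ncard_le_ncard (Set.diff_subset_diff_left (hIsub j')) (Set.toFinite _))
  · -- partial classes vs integral parts
    intro j i h
    obtain ⟨ja', hja'⟩ := h
    have hja : PartIn (Vf i) (Pf ja') := (SP1 i ja').mp hja'
    obtain ⟨x, hxV, hxP⟩ : ∃ x, x ∈ Vf i ∧ x ∉ Pf ja' := by
      by_contra hcon
      push_neg at hcon
      exact hja.2 hcon
    obtain ⟨jb, hxjb, -⟩ := hPpart x
    have hba : jb ≠ ja' := fun h => hxP (h ▸ hxjb)
    have hjb : PartIn (Vf i) (Pf jb) := by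
      refine ⟨⟨x, hxV, hxjb⟩, fun hsub => ?_⟩
      obtain ⟨y, hyV, hyP⟩ := hja.1
      exact hPdisj jb ja' hba y (hsub hyV) hyP
    obtain ⟨Ba, hBaVP, hBaX, hBacard⟩ := hY5 ja' i hja
    obtain ⟨Bb, hBbVP, hBbX, hBbcard⟩ := hY5 jb i hjb
    have hdisj : Disjoint Ba Bb := Set.disjoint_left.mpr (fun z hza hzb =>
      hPdisj ja' jb (Ne.symm hba) z (hBaVP hza).2 (hBbVP hzb).2)
    have hBV : Ba ∪ Bb ⊆ Vf i :=
      Set.union_subset (hBaVP.trans Set.inter_subset_left) (hBbVP.trans Set.inter_subset_left)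
    have hBX : Ba ∪ Bb ⊆ X :=
      Set.union_subset (hBaX.trans (hXFX ja')) (hBbX.trans (hXFX jb))
    have hcarve := ncard_carve (Vf i) X (Ba ∪ Bb) hBV hBX
    have hBcard : (Ba ∪ Bb).ncard = 3*k + 3*k := by
      rw [Set.ncard_union_eq hdisj (Set.toFinite _) (Set.toFinite _), hBacard, hBbcard]
    have h4 := nat4 j i ⟨ja', hja⟩
    have h3 := hY3 j
    show (Vf i \ X).ncard ≤ (intPart (fun i => Vf i \ X) (Pf j \ X)).ncard
    rw [SP2 j, hIXeq j]
    omega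
  · -- the final condition
    intro j j' i hjj hss
    have hss' : Vf i \ X ⊆ Pf j \ X := hss
    show ((Pf j \ X) \ (Vf i \ X)).ncard ≤ (intPart (fun i => Vf i \ X) (Pf j' \ X)).ncard
    rw [SP2 j', hdd]
    by_cases hiV : (Vf i).Nonempty
    · have hVP : Vf i ⊆ Pf j := SP3 i j hiV hss'
      by_cases hJPj : ∃ i', PartIn (Vf i') (Pf j)
      · obtain ⟨ip, hip⟩ := hJPj
        obtain ⟨B, hBVP, hBX, hBcard⟩ := hY5 j ip hip
        have hiip : i ≠ ip := fun h => hip.2 (h ▸ hVP)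
        have hBPV : B ⊆ Pf j \ Vf i := fun z hz =>
          ⟨(hBVP hz).2, fun hzi => hVdisj ip i (Ne.symm hiip) z (hBVP hz).1 hzi⟩
        have hc := ncard_carve (Pf j \ Vf i) X B hBPV (hBX.trans (hXFX j))
        have h5 := nat5 j j' i hjj hVP
        have h3 := hY3 j'
        rw [hIXeq j']
        omega
      · by_cases hlow : (intPart Vf (Pf j)).ncard ≤ G + 2*k
        · have hsub : (Pf j \ Vf i) \ X ⊆ intPart Vf (Pf j) \ X :=
            Set.diff_subset_diff_left (fun x hx => hPsubI j hJPj hx.1)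
          calc ((Pf j \ Vf i) \ X).ncard ≤ (intPart Vf (Pf j) \ X).ncard :=
                Set.ncard_le_ncard hsub (Set.toFinite _)
            _ = G := hIXG j hlow
            _ ≤ (intPart Vf (Pf j') \ X).ncard := hIXge j'
        · have h6 := hY6 j (by omega) i hiV hVP
          rw [hloc j (Pf j \ Vf i) Set.diff_subset]
          exact le_trans h6 (hIXge j')
    · -- the class Vf i is empty
      have hVe : Vf i = ∅ := Set.not_nonempty_iff_eq_empty.mp hiV
      have hcard2 : 1 < Fintype.card (Fin (t-1)) := by
        rw [Fintype.card_fin]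
        omega
      have hJempty : ∀ j1, ¬ ∃ i1, PartIn (Vf i1) (Pf j1) := by
        rintro j1 ⟨i1, hi1⟩
        obtain ⟨j2, hj2⟩ := Fintype.exists_ne_of_one_lt_card hcard2 j1
        have e1 : (Pf j1).ncard ≤ (intPart Vf (Pf j2)).ncard + k := by
          have h := nat5 j1 j2 i (Ne.symm hj2) (by rw [hVe]; exact Set.empty_subset _)
          rwa [hVe, Set.diff_empty] at h
        have e2 : (Pf j2).ncard ≤ (intPart Vf (Pf j1)).ncard + k := by
          have h := nat5 j2 j1 i hj2 (by rw [hVe]; exact Set.empty_subset _)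
          rwa [hVe, Set.diff_empty] at h
        have e3 : (intPart Vf (Pf j2)).ncard ≤ (Pf j2).ncard :=
          Set.ncard_le_ncard (hIsub j2) (Set.toFinite _)
        have e4 : (intPart Vf (Pf j1)).ncard + (Vf i1 ∩ Pf j1).ncard ≤ (Pf j1).ncard := by
          refine ncard_glue _ _ _ (hIsub j1) Set.inter_subset_right ?_
          exact Set.disjoint_left.mpr (fun z hzI hzV => hpieceI i1 j1 hi1 z hzV.1 hzI)
        have e5 := hbig2' i1 j1 hi1.1
        omega
      have hAlow : ∀ j1, (intPart Vf (Pf j1)).ncard ≤ G + 2*k := by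
        intro j1
        by_cases hj : j1 = j₀
        · subst hj
          omega
        · have h5 := nat5 j1 j₀ i hj (by rw [hVe]; exact Set.empty_subset _)
          rw [hVe, Set.diff_empty] at h5
          have h6 : (intPart Vf (Pf j1)).ncard ≤ (Pf j1).ncard :=
            Set.ncard_le_ncard (hIsub j1) (Set.toFinite _)
          omega
      rw [hVe, Set.diff_empty, hPeqI j (hJempty j), hIXG j (hAlow j)]
      exact hIXge j'
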